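/- Let p be an odd prime, let n > 1 be an integer, let F_q be the finite field with q = p^n elements, and let γ ∈ F_q \ {1}. Then #{ i ∈ ℤ : 1 ≤ i ≤ q−2 and γ^{i+1} = i(1−γ) + 1 } ≤ q/p + √(3p/2 − 39/16) + 1/4 (as an inequality of real numbers). -/

import Mathlib

private lemma sum_of_distinct_pos (k : ℕ) : ∀ (E : Finset ℕ), E.card = k → 0 ∉ E →
    k * (k + 1) ≤ 2 * ∑ x ∈ E, x := by
  induction k with
  | zero => intro E h _; simp
  | succ k ih =>
    intro E hcard h0
    have hne : E.Nonempty := Finset.card_pos.mp (by omega)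
    have hMmem : E.max' hne ∈ E := E.max'_mem hne
    set M := E.max' hne with hM
    have hsub : E ⊆ Finset.Icc 1 M := by
      intro x hx
      simp only [Finset.mem_Icc]
      exact ⟨Nat.one_le_iff_ne_zero.mpr (fun h => h0 (h ▸ hx)), E.le_max' x hx⟩
    have hcard_le : k + 1 ≤ M := by
      have h1 := Finset.card_le_card hsub
      rw [hcard] at h1
      simpa [Nat.card_Icc] using h1
    have hsum : ∑ x ∈ E, x = M + ∑ x ∈ E.erase M, x := by
      exact (Finset.add_sum_erase E id hMmem).symm
    have hcard' : (E.erase M).card = k := by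
      rw [Finset.card_erase_of_mem hMmem, hcard]
      omega
    have ih' := ih (E.erase M) hcard' (fun h => h0 (Finset.mem_of_mem_erase h))
    have hexp : (k+1) * (k+1+1) = k * (k+1) + 2*(k+1) := by ring
    omega

private lemma filter_mod_card_le (s : Finset ℕ) (K m v : ℕ) (hm : 0 < m)
    (hK : ∀ i ∈ s, i ≤ K) :
    (s.filter fun i => i % m = v).card ≤ K / m + 1 := by
  have hcr : (Finset.range (K/m + 1)).card = K/m + 1 := Finset.card_range _
  rw [← hcr]
  apply Finset.card_le_card_of_injOn (fun i => i / m)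
  · intro i hi
    have hi' : i ∈ s ∧ i % m = v := by simpa using hi
    rw [Finset.mem_coe, Finset.mem_range]
    have h2 : i / m ≤ K / m := Nat.div_le_div_right (hK i hi'.1)
    show i / m < K / m + 1
    omega
  · intro i hi j hj hij
    have hi' : i ∈ s ∧ i % m = v := by simpa using hi
    have hj' : j ∈ s ∧ j % m = v := by simpa using hj
    have h3 : i / m = j / m := hij
    have h4 : i % m = j % m := by rw [hi'.2, hj'.2]
    rw [← Nat.div_add_mod i m, ← Nat.div_add_mod j m, h3, h4]

private lemma filter_mod_card_le2 (s : Finset ℕ) (m v Q c : ℕ) (hm : 0 < m)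
    (hK : ∀ i ∈ s, i ≤ m * Q + c) (hcv : c < v) :
    (s.filter fun i => i % m = v).card ≤ Q := by
  have hcr : (Finset.range Q).card = Q := Finset.card_range _
  rw [← hcr]
  apply Finset.card_le_card_of_injOn (fun i => i / m)
  · intro i hi
    have hi' : i ∈ s ∧ i % m = v := by simpa using hi
    rw [Finset.mem_coe, Finset.mem_range]
    show i / m < Q
    by_contra hge
    push_neg at hge
    have h1 := Nat.div_add_mod i m
    have h2 : m * Q ≤ m * (i / m) := Nat.mul_le_mul_left m hge
    have h3 := hK i hi'.1
    have h4 : i % m = v := hi'.2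
    omega
  · intro i hi j hj hij
    have hi' : i ∈ s ∧ i % m = v := by simpa using hi
    have hj' : j ∈ s ∧ j % m = v := by simpa using hj
    have h3 : i / m = j / m := hij
    have h4 : i % m = j % m := by rw [hi'.2, hj'.2]
    rw [← Nat.div_add_mod i m, ← Nat.div_add_mod j m, h3, h4]

private lemma sidon_sq_bound (p : ℕ) (hp : 3 ≤ p) (S : Finset ℕ)
    (hlt : ∀ a ∈ S, a < p)
    (key : ∀ a ∈ S, ∀ b ∈ S, ∀ a' ∈ S, ∀ b' ∈ S,
      a < b → a' < b' → b - a = b' - a' → a = a' ∧ b = b') :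
    2 * S.card * S.card + 8 ≤ 5 * S.card + 3 * p := by
  by_cases hs3 : S.card < 3
  · have h1 : S.card ≤ 2 := by omega
    have h2 : 2 * S.card * S.card ≤ 4 * S.card :=
      by nlinarith [h1]
    omega
  push_neg at hs3
  set s := S.card with hs
  have hcard : S.card = s := rfl
  set e := S.orderEmbOfFin hcard with he
  set w : ℕ → ℕ := fun j => if h : j < s then e ⟨j, h⟩ else p + j with hw
  have hmem : ∀ j, j < s → w j ∈ S := by
    intro j hj
    simp only [hw, dif_pos hj]
    exact Finset.orderEmbOfFin_mem S hcard ⟨j, hj⟩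
  have hwlt : ∀ j, j < s → w j < p := fun j hj => hlt _ (hmem j hj)
  have hmono : StrictMono w := by
    intro i j hij
    by_cases hi : i < s
    · by_cases hj : j < s
      · simp only [hw, dif_pos hi, dif_pos hj]
        exact e.strictMono (show (⟨i, hi⟩ : Fin s) < ⟨j, hj⟩ from hij)
      · have h1 : w j = p + j := by simp [hw, dif_neg hj]
        have h2 := hwlt i hi
        omega
    · have hj : ¬ j < s := fun h => hi (lt_trans hij h)
      simp only [hw, dif_neg hi, dif_neg hj]
      omega
  have keyw : ∀ i j i' j' : ℕ, i < j → j < s → i' < j' → j' < s →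
      w j - w i = w j' - w i' → i = i' ∧ j = j' := by
    intro i j i' j' hij hjs hij' hjs' hdiff
    have h1 := key (w i) (hmem i (lt_trans hij hjs)) (w j) (hmem j hjs)
      (w i') (hmem i' (lt_trans hij' hjs')) (w j') (hmem j' hjs')
      (hmono hij) (hmono hij') hdiff
    exact ⟨hmono.injective h1.1, hmono.injective h1.2⟩
  classical
  set E1 : Finset ℕ := (Finset.range (s-1)).image (fun j => w (j+1) - w j) with hE1
  set E2 : Finset ℕ := (Finset.range (s-2)).image (fun j => w (j+2) - w j) with hE2
  have hinj1 : ∀ x ∈ Finset.range (s-1), ∀ y ∈ Finset.range (s-1),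
      w (x+1) - w x = w (y+1) - w y → x = y := by
    intro x hx y hy hxy
    rw [Finset.mem_range] at hx hy
    exact (keyw x (x+1) y (y+1) (by omega) (by omega) (by omega) (by omega) hxy).1
  have hinj2 : ∀ x ∈ Finset.range (s-2), ∀ y ∈ Finset.range (s-2),
      w (x+2) - w x = w (y+2) - w y → x = y := by
    intro x hx y hy hxy
    rw [Finset.mem_range] at hx hy
    exact (keyw x (x+2) y (y+2) (by omega) (by omega) (by omega) (by omega) hxy).1
  have hcard1 : E1.card = s - 1 := by
    rw [hE1, Finset.card_image_of_injOn (fun x hx y hy => hinj1 x hx y hy), Finset.card_range]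
  have hcard2 : E2.card = s - 2 := by
    rw [hE2, Finset.card_image_of_injOn (fun x hx y hy => hinj2 x hx y hy), Finset.card_range]
  have hdisj : Disjoint E1 E2 := by
    rw [Finset.disjoint_left]
    intro a ha1 ha2
    rw [hE1, Finset.mem_image] at ha1
    rw [hE2, Finset.mem_image] at ha2
    obtain ⟨x, hx, hxa⟩ := ha1
    obtain ⟨y, hy, hya⟩ := ha2
    rw [Finset.mem_range] at hx hy
    have := keyw x (x+1) y (y+2) (by omega) (by omega) (by omega) (by omega)
      (by rw [hxa, hya])
    omega
  set E : Finset ℕ := E1 ∪ E2 with hE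
  have hcardE : E.card = 2 * s - 3 := by
    rw [hE, Finset.card_union_of_disjoint hdisj, hcard1, hcard2]
    omega
  have h0E : 0 ∉ E := by
    rw [hE, Finset.mem_union]
    rintro (h | h)
    · rw [hE1, Finset.mem_image] at h
      obtain ⟨x, _, hxa⟩ := h
      have := hmono (show x < x + 1 by omega)
      omega
    · rw [hE2, Finset.mem_image] at h
      obtain ⟨x, _, hxa⟩ := h
      have := hmono (show x < x + 2 by omega)
      omega
  have hsum1 : ∑ x ∈ E1, x = w (s-1) - w 0 := by
    rw [hE1, Finset.sum_image hinj1]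
    have := Finset.sum_range_tsub (f := w) hmono.monotone (s-1)
    simpa using this
  have hsum2 : ∑ x ∈ E2, x = (w (s-2) + w (s-1)) - (w 0 + w 1) := by
    rw [hE2, Finset.sum_image hinj2]
    have hg : Monotone (fun j => w j + w (j+1)) := by
      intro a b hab
      have h1 := hmono.monotone hab
      have h2 := hmono.monotone (show a + 1 ≤ b + 1 by omega)
      show w a + w (a+1) ≤ w b + w (b+1)
      omega
    have ht := Finset.sum_range_tsub (f := fun j => w j + w (j+1)) hg (s-2)
    have hterm : ∀ j ∈ Finset.range (s-2),
        w (j+2) - w j = (w (j+1) + w (j+1+1)) - (w j + w (j+1)) := by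
      intro j _
      have h1 := hmono.monotone (show j ≤ j + 1 by omega)
      have h2 := hmono.monotone (show j + 1 ≤ j + 2 by omega)
      have : j + 1 + 1 = j + 2 := by omega
      rw [this]
      omega
    rw [Finset.sum_congr rfl hterm, ht]
    have hs2 : s - 2 + 1 = s - 1 := by omega
    rw [hs2]
  have hsumE : ∑ x ∈ E, x ≤ 3 * p - 5 := by
    rw [hE, Finset.sum_union hdisj, hsum1, hsum2]
    have hA : w (s-1) < p := hwlt _ (by omega)
    have hB : w (s-2) < w (s-1) := hmono (by omega)
    have hC : w 0 < w 1 := hmono (by omega)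
    omega
  have htri := sum_of_distinct_pos E.card E rfl h0E
  rw [hcardE] at htri
  have hfin : (2*s-3) * (2*s-3+1) ≤ 2 * (3 * p - 5) := le_trans htri (by omega)
  have h3s : 3 ≤ s := hs3
  -- cast to integers for the algebra
  have hZ : ((2*s-3 : ℕ) : ℤ) = 2*(s:ℤ) - 3 := by
    push_cast [show 3 ≤ 2*s by omega]
    ring
  have hZ2 : ((2 * (3*p-5) : ℕ) : ℤ) = 6*(p:ℤ) - 10 := by
    push_cast [show 5 ≤ 3*p by omega]
    ring
  have hfinZ : (2*(s:ℤ) - 3) * (2*(s:ℤ) - 3 + 1) ≤ 6*(p:ℤ) - 10 := by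
    have := (Int.ofNat_le.mpr hfin)
    push_cast at this
    rw [hZ] at this
    push_cast [show 5 ≤ 3*p by omega] at this
    linarith
  have hgoal : 2*(s:ℤ)*(s:ℤ) + 8 ≤ 5*(s:ℤ) + 3*(p:ℤ) := by nlinarith [hfinZ]
  exact_mod_cast hgoal

set_option maxHeartbeats 3200000

/-- **Proposition.** For `p` an odd prime, `n > 1`, `F` the finite field with `q = p^n`
elements and `γ ∈ F \ {1}`:
`#{1 ≤ i ≤ q-2 : γ^{i+1} = i(1-γ) + 1} ≤ q/p + √(3p/2 - 39/16) + 1/4`. -/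
theorem card_exp_eq_linear_le_q_div_p {p n : ℕ} [Fact p.Prime] (hp : Odd p) (hn : 1 < n)
    {F : Type*} [Field F] [Fintype F] [CharP F p] (hcard : Fintype.card F = p ^ n)
    (γ : F) (hγ : γ ≠ 1) :
    ({i : ℕ | 1 ≤ i ∧ i ≤ p ^ n - 2 ∧ γ ^ (i + 1) = (i : F) * (1 - γ) + 1}.ncard : ℝ) ≤
      (p : ℝ) ^ n / p + Real.sqrt (3 * p / 2 - 39 / 16) + 1 / 4 := by
  classical
  have hp' : p.Prime := Fact.out
  have hp2 : 2 ≤ p := hp'.two_le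
  have hpne2 : p ≠ 2 := by rintro rfl; exact (by norm_num : ¬ Odd 2) hp
  have hp3 : 3 ≤ p := by
    rcases Nat.lt_or_ge p 3 with h | h
    · omega
    · exact h
  set q := p ^ n with hq
  have hqge : p * p ≤ q := by
    calc p * p = p ^ 2 := (sq p).symm
    _ ≤ p ^ n := Nat.pow_le_pow_right (by omega) hn
  have hq9 : 9 ≤ q := le_trans (by nlinarith) hqge
  have hqgep : p ≤ q := le_trans (Nat.le_mul_of_pos_left p (by omega)) hqge
  have hppos : 0 < p := by omega
  clear_value q
  -- real facts
  have hpR : (3:ℝ) ≤ (p:ℝ) := by exact_mod_cast hp3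
  have hpRpos : (0:ℝ) < (p:ℝ) := by linarith
  set u := Real.sqrt (3 * (p:ℝ) / 2 - 39 / 16) with hu
  have harg : (0:ℝ) ≤ 3 * (p:ℝ) / 2 - 39/16 := by linarith
  have hu0 : 0 ≤ u := Real.sqrt_nonneg _
  have hu2 : u ^ 2 = 3 * (p:ℝ) / 2 - 39/16 := Real.sq_sqrt harg
  have hu74 : (7:ℝ)/4 - 2/(p:ℝ) ≤ u := by
    have hp35 : p = 3 ∨ 5 ≤ p := by
      have h4 : p ≠ 4 := by rintro rfl; norm_num at hp'
      omega
    rcases hp35 with h3 | h5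
    · subst h3
      have : ((3:ℕ):ℝ) = 3 := by norm_num
      rw [hu, this, show (3:ℝ) * 3 / 2 - 39/16 = 33/16 by norm_num]
      have h1 : ((13:ℝ)/12) ≤ Real.sqrt (33/16) := by
        rw [show (33:ℝ)/16 = 33/16 from rfl]
        rw [← Real.sqrt_sq (by norm_num : (0:ℝ) ≤ 13/12)]
        apply Real.sqrt_le_sqrt
        norm_num
      have h2 : (7:ℝ)/4 - 2/(3:ℝ) = 13/12 := by norm_num
      linarith [h1]
    · have h5R : (5:ℝ) ≤ (p:ℝ) := by exact_mod_cast h5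
      have h1 : (7:ℝ)/4 ≤ u := by
        rw [hu, ← Real.sqrt_sq (by norm_num : (0:ℝ) ≤ 7/4)]
        apply Real.sqrt_le_sqrt
        nlinarith
      have h2 : (0:ℝ) ≤ 2/(p:ℝ) := by positivity
      linarith
  have hq2cast : ((q - 2 : ℕ) : ℝ) = (q:ℝ) - 2 := by
    push_cast [show 2 ≤ q by omega]
    ring
  have hqR : ((q:ℕ):ℝ) = (p:ℝ)^n := by rw [hq]; push_cast; ring
  -- finset version
  set C : ℕ → Prop := fun i => γ ^ (i+1) = (i : F) * (1 - γ) + 1 with hC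
  set Fs : Finset ℕ := (Finset.Icc 1 (q-2)).filter (fun i => C i) with hFs
  have hset : {i : ℕ | 1 ≤ i ∧ i ≤ q - 2 ∧ C i} = ↑Fs := by
    ext i
    simp [hFs, Finset.mem_filter, Finset.mem_Icc, and_assoc]
  rw [hset, Set.ncard_coe_finset, ← hqR]
  have hFs_C : ∀ i ∈ Fs, C i := fun i hi => (Finset.mem_filter.mp hi).2
  have hFs_le : ∀ i ∈ Fs, i ≤ q - 2 := fun i hi =>
    (Finset.mem_Icc.mp (Finset.mem_filter.mp hi).1).2
  have hβ : (1 - γ) ≠ 0 := sub_ne_zero.mpr (fun h => hγ h.symm)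
  by_cases hγ0 : γ = 0
  · -- CASE A : γ = 0
    have hdvd : ∀ i ∈ Fs, p ∣ (i+1) := by
      intro i hi
      have hCi : C i := hFs_C i hi
      rw [hC] at hCi
      simp only [hγ0] at hCi
      rw [zero_pow (Nat.succ_ne_zero i)] at hCi
      have h1 : ((i+1 : ℕ) : F) = 0 := by
        push_cast
        linear_combination -hCi
      exact (CharP.cast_eq_zero_iff F p (i+1)).mp h1
    have hcount : Fs.card ≤ (q-1)/p := by
      have h := Finset.card_le_card_of_injOn (t := Finset.Icc 1 ((q-1)/p)) (fun i => (i+1)/p)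
        (fun i hi => by
          obtain ⟨k, hk⟩ := hdvd i hi
          have hi1 : 1 ≤ i ∧ i ≤ q - 2 := Finset.mem_Icc.mp (Finset.mem_filter.mp hi).1
          rw [Finset.mem_coe, Finset.mem_Icc]
          show 1 ≤ (i+1)/p ∧ (i+1)/p ≤ (q-1)/p
          constructor
          · rw [hk, Nat.mul_div_cancel_left _ hppos]
            rcases Nat.eq_zero_or_pos k with h0 | h0
            · rw [h0, Nat.mul_zero] at hk
              omega
            · exact h0
          · apply Nat.div_le_div_right
            omega)
        (fun i hi j hj hij => by
          obtain ⟨k, hk⟩ := hdvd i (Finset.mem_coe.mp hi)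
          obtain ⟨l, hl⟩ := hdvd j (Finset.mem_coe.mp hj)
          have h1 : (i+1)/p = k := by rw [hk, Nat.mul_div_cancel_left _ hppos]
          have h2 : (j+1)/p = l := by rw [hl, Nat.mul_div_cancel_left _ hppos]
          have h3 : (i+1)/p = (j+1)/p := hij
          have hkl : k = l := by rw [← h1, ← h2]; exact h3
          have h4 : i + 1 = j + 1 := by rw [hk, hl, hkl]
          omega)
      simpa [Nat.card_Icc] using h
    have h1 : (Fs.card : ℝ) ≤ (((q-1)/p : ℕ) : ℝ) := by exact_mod_cast hcount
    have h2 : (((q-1)/p : ℕ) : ℝ) ≤ ((q-1 : ℕ):ℝ)/(p:ℝ) := Nat.cast_div_le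
    have h3 : ((q-1:ℕ):ℝ) ≤ (q:ℝ) := by
      have : (q-1:ℕ) ≤ q := Nat.sub_le q 1
      exact_mod_cast this
    have h4 : ((q-1:ℕ):ℝ)/(p:ℝ) ≤ (q:ℝ)/(p:ℝ) := by
      gcongr
    linarith
  · -- CASE B : γ ≠ 0
    set d := orderOf γ with hd
    have hq1 : γ ^ (q - 1) = 1 := by
      have h := FiniteField.pow_card_sub_one_eq_one γ hγ0
      rwa [hcard] at h
    have hddvd : d ∣ q - 1 := orderOf_dvd_of_pow_eq_one hq1
    have hd0 : d ≠ 0 := by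
      intro h
      rw [h] at hddvd
      have := Nat.eq_zero_of_zero_dvd hddvd
      omega
    have hd1 : d ≠ 1 := fun h => hγ (orderOf_eq_one_iff.mp h)
    have hd2 : 2 ≤ d := by omega
    have hpd : ¬ p ∣ d := by
      intro hpd
      have h1 : p ∣ q - 1 := hpd.trans hddvd
      have h2 : p ∣ q := by
        rw [hq]
        exact dvd_pow_self p (by omega : n ≠ 0)
      have h3 : p ∣ q - (q - 1) := Nat.dvd_sub h2 h1
      rw [show q - (q-1) = 1 by omega] at h3
      have := Nat.le_of_dvd one_pos h3
      omega
    have hcop : Nat.Coprime d p := ((Nat.Prime.coprime_iff_not_dvd hp').mpr hpd).symm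
    set m₀ := d * p with hm₀
    have hm₀pos : 0 < m₀ := by
      have : 0 < d := by omega
      exact Nat.mul_pos this hppos
    -- pow equivalence through units
    set γu : Fˣ := Units.mk0 γ hγ0 with hγu
    have hγuv : ∀ k : ℕ, ((γu ^ k : Fˣ) : F) = γ ^ k := fun k => by
      rw [Units.val_pow_eq_pow_val]
      rfl
    have horder : orderOf γu = d := by
      rw [hd, ← orderOf_units]
      rfl
    have hpow_iff : ∀ a b : ℕ, γ ^ a = γ ^ b ↔ a ≡ b [MOD d] := by
      intro a b
      rw [← horder, ← pow_eq_pow_iff_modEq]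
      constructor
      · intro h
        ext
        rw [hγuv, hγuv]
        exact h
      · intro h
        rw [← hγuv, ← hγuv, h]
    have hcast_iff : ∀ a b : ℕ, ((a:ℕ):F) = ((b:ℕ):F) ↔ a ≡ b [MOD p] :=
      fun a b => CharP.natCast_eq_natCast F p
    -- transport of condition along classes mod m₀
    have hCmod : ∀ v w : ℕ, v ≡ w [MOD m₀] → C v → C w := by
      intro v w hvw hCv
      have h1 : v ≡ w [MOD d] := hvw.of_dvd ⟨p, rfl⟩
      have h2 : v ≡ w [MOD p] := hvw.of_dvd ⟨d, by rw [hm₀, mul_comm]⟩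
      rw [hC]
      calc γ ^ (w+1) = γ ^ (v+1) := (hpow_iff _ _).mpr ((h1.symm).add_right 1)
      _ = (v:F) * (1-γ) + 1 := hCv
      _ = (w:F) * (1-γ) + 1 := by rw [(hcast_iff v w).mpr h2]
    -- the set of classes
    set A := Fs.image (fun i => i % m₀) with hA
    have hAmem : ∀ v ∈ A, C v ∧ v < m₀ := by
      intro v hv
      obtain ⟨i, hi, rfl⟩ := Finset.mem_image.mp hv
      exact ⟨hCmod i _ (Nat.mod_modEq i m₀).symm (hFs_C i hi), Nat.mod_lt i hm₀pos⟩
    -- mod p determines the class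
    have hdet_p : ∀ v w : ℕ, C v → C w → v < m₀ → w < m₀ → v ≡ w [MOD p] → v = w := by
      intro v w hCv hCw hv hw hvw
      have hcst : ((v:ℕ):F) = ((w:ℕ):F) := (hcast_iff v w).mpr hvw
      have h1 : γ ^ (v+1) = γ ^ (w+1) := by
        rw [hC] at hCv hCw
        rw [hCv, hCw, hcst]
      have h2 : v + 1 ≡ w + 1 [MOD d] := (hpow_iff _ _).mp h1
      have h3 : v ≡ w [MOD d] := Nat.ModEq.add_right_cancel' 1 h2
      have h4 : v ≡ w [MOD m₀] := by
        rw [hm₀]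
        exact (Nat.modEq_and_modEq_iff_modEq_mul hcop).mp ⟨h3, hvw⟩
      have h5 : v % m₀ = w % m₀ := h4
      rwa [Nat.mod_eq_of_lt hv, Nat.mod_eq_of_lt hw] at h5
    -- mod d determines the class
    have hdet_d : ∀ v w : ℕ, C v → C w → v < m₀ → w < m₀ → v ≡ w [MOD d] → v = w := by
      intro v w hCv hCw hv hw hvd
      have h1 : γ ^ (v+1) = γ ^ (w+1) := (hpow_iff _ _).mpr (hvd.add_right 1)
      rw [hC] at hCv hCw
      have h2 : (v:F) * (1-γ) + 1 = (w:F) * (1-γ) + 1 := by rw [← hCv, ← hCw, h1]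
      have h3 : (v:F) = (w:F) := by
        have h2' : ((v:F) - (w:F)) * (1-γ) = 0 := by linear_combination h2
        rcases mul_eq_zero.mp h2' with h | h
        · linear_combination h
        · exact absurd h hβ
      have h4 : v ≡ w [MOD p] := (hcast_iff v w).mp h3
      exact hdet_p v w hCv hCw hv hw h4
    -- counting by fibers
    have hcount : Fs.card = ∑ v ∈ A, (Fs.filter fun i => i % m₀ = v).card :=
      Finset.card_eq_sum_card_fiberwise (fun i hi => Finset.mem_image_of_mem _ hi)
    set T := A.card with hT
    have hT_le_p : T ≤ p := by
      rw [hT, ← Finset.card_range p]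
      apply Finset.card_le_card_of_injOn (fun v => v % p)
      · intro v hv
        rw [Finset.mem_coe, Finset.mem_range]
        exact Nat.mod_lt v hppos
      · intro v hv w hw hvw
        have hv' := hAmem v (Finset.mem_coe.mp hv)
        have hw' := hAmem w (Finset.mem_coe.mp hw)
        exact hdet_p v w hv'.1 hw'.1 hv'.2 hw'.2 hvw
    clear_value d m₀ A T γu
    by_cases hfrob : γ ^ p = γ
    · -- CASE B1 : γ^p = γ  (γ in the prime field)
      have hγp1 : γ ^ (p-1) = 1 := by
        have h1 : γ ^ (p-1) * γ = 1 * γ := by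
          rw [one_mul, ← pow_succ, show p - 1 + 1 = p by omega, hfrob]
        exact mul_right_cancel₀ hγ0 h1
      have hdp1 : d ∣ p - 1 := by
        rw [hd]
        exact orderOf_dvd_of_pow_eq_one hγp1
      have hdq : d ∣ p^(n-1) - 1 := by
        apply hdp1.trans
        have h := Nat.sub_dvd_pow_sub_pow p 1 (n-1)
        simpa using h
      have hqp : m₀ ∣ q - p := by
        have h1 : q - p = (p^(n-1) - 1) * p := by
          have h2 : p^(n-1) * p = q := by
            rw [hq, ← pow_succ, show n - 1 + 1 = n by omega]
          have h3 : 1 ≤ p^(n-1) := Nat.one_le_pow _ _ hppos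
          rw [Nat.sub_mul, h2, one_mul]
        rw [h1, hm₀]
        exact mul_dvd_mul hdq dvd_rfl
      obtain ⟨Q, hQ⟩ := hqp
      have hQ1 : 1 ≤ Q := by
        rcases Nat.eq_zero_or_pos Q with h0 | h0
        · exfalso
          rw [h0, Nat.mul_zero] at hQ
          have h1 : q ≤ p := Nat.sub_eq_zero_iff_le.mp hQ
          have h2 : 2*p ≤ p*p := Nat.mul_le_mul_right p hp2
          omega
        · exact h0
      have hq2eq : q - 2 = m₀ * Q + (p - 2) := by
        have step : q - 2 = (q - p) + (p - 2) := by omega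
        rw [step, hQ]
      -- fiber bounds
      have hMQ : (q-2)/m₀ = Q := by
        have h1 : 2 * p ≤ m₀ := by
          rw [hm₀]
          exact Nat.mul_le_mul_right p hd2
        rw [hq2eq, Nat.mul_add_div hm₀pos, Nat.div_eq_of_lt (by omega), add_zero]
      have hfib1 : ∀ v, (Fs.filter fun i => i % m₀ = v).card ≤ Q + 1 := by
        intro v
        have h := filter_mod_card_le Fs (q-2) m₀ v hm₀pos hFs_le
        rwa [hMQ] at h
      have hfib2 : ∀ v, p - 1 ≤ v → (Fs.filter fun i => i % m₀ = v).card ≤ Q := by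
        intro v hv
        apply filter_mod_card_le2 Fs m₀ v Q (p-2) hm₀pos
        · intro i hi
          have := hFs_le i hi
          omega
        · omega
      -- main counting bound
      have hNle : Fs.card ≤ T * Q + (A.filter fun v => v ≤ p - 2).card := by
        rw [hcount]
        calc ∑ v ∈ A, (Fs.filter fun i => i % m₀ = v).card
            ≤ ∑ v ∈ A, (Q + if v ≤ p - 2 then 1 else 0) := by
              apply Finset.sum_le_sum
              intro v _
              by_cases hvp : v ≤ p - 2
              · rw [if_pos hvp]
                exact hfib1 v
              · rw [if_neg hvp]
                rw [Nat.add_zero]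
                exact hfib2 v (by omega)
        _ = T * Q + (A.filter fun v => v ≤ p - 2).card := by
              rw [Finset.sum_add_distrib, Finset.sum_const, smul_eq_mul, hT,
                Finset.card_filter]
      have hT_le_d : T ≤ d := by
        rw [hT, ← Finset.card_range d]
        apply Finset.card_le_card_of_injOn (fun v => v % d)
        · intro v _
          rw [Finset.mem_coe, Finset.mem_range]
          exact Nat.mod_lt v (by omega)
        · intro v hv w hw hvw
          have hv' := hAmem v (Finset.mem_coe.mp hv)
          have hw' := hAmem w (Finset.mem_coe.mp hw)
          exact hdet_d v w hv'.1 hw'.1 hv'.2 hw'.2 hvw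
      -- the prime-field solution set
      set S' := (Finset.range p).filter (fun v => C v) with hS'
      set s := S'.card with hs
      have hS'lt : ∀ a ∈ S', a < p := by
        intro a ha
        exact Finset.mem_range.mp (Finset.mem_filter.mp ha).1
      have hS'C : ∀ a ∈ S', C a := fun a ha => (Finset.mem_filter.mp ha).2
      have hp1mem : (p-1) ∈ S' := by
        rw [hS', Finset.mem_filter, Finset.mem_range]
        refine ⟨by omega, ?_⟩
        show γ ^ (p - 1 + 1) = ((p-1 : ℕ):F) * (1 - γ) + 1
        rw [show p - 1 + 1 = p by omega, hfrob]
        have h2 : ((p-1:ℕ):F) = -1 := by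
          have h3 : ((p-1:ℕ):F) + 1 = ((p-1+1 : ℕ):F) := by push_cast; ring
          rw [show p - 1 + 1 = p by omega] at h3
          rw [CharP.cast_eq_zero F p] at h3
          linear_combination h3
        rw [h2]
        ring
      have hs1 : 1 ≤ s := by
        rw [hs]
        exact Finset.card_pos.mpr ⟨p-1, hp1mem⟩
      have hh_le : (A.filter fun v => v ≤ p - 2).card ≤ s - 1 := by
        have hsub : (A.filter fun v => v ≤ p - 2) ⊆ S'.erase (p-1) := by
          intro v hv
          obtain ⟨hvA, hvle⟩ := Finset.mem_filter.mp hv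
          have hv' := hAmem v hvA
          rw [Finset.mem_erase]
          constructor
          · omega
          · rw [hS', Finset.mem_filter, Finset.mem_range]
            exact ⟨by omega, hv'.1⟩
        have h1 := Finset.card_le_card hsub
        rwa [Finset.card_erase_of_mem hp1mem, ← hs] at h1
      -- Sidon key property on S'
      have hkey : ∀ a ∈ S', ∀ b ∈ S', ∀ a' ∈ S', ∀ b' ∈ S',
          a < b → a' < b' → b - a = b' - a' → a = a' ∧ b = b' := by
        intro a ha b hb a' ha' b' hb' hab hab' hdiff
        have hCa := hS'C a ha
        have hCb := hS'C b hb
        have hCa' := hS'C a' ha'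
        have hCb' := hS'C b' hb'
        have halt := hS'lt a ha
        have hblt := hS'lt b hb
        have halt' := hS'lt a' ha'
        have hblt' := hS'lt b' hb'
        set δ := b - a with hδ
        have hbd : b = a + δ := by omega
        have hbd' : b' = a' + δ := by omega
        have hδ0 : 0 < δ := by omega
        have hδp : δ < p := by omega
        rw [hC] at hCa hCb hCa' hCb'
        have hEa : (((a:ℕ):F)*(1-γ)+1) * γ^δ = (((a:ℕ):F) + ((δ:ℕ):F))*(1-γ) + 1 := by
          have h1 : γ^(b+1) = γ^(a+1) * γ^δ := by
            rw [← pow_add, show a + 1 + δ = b + 1 by omega]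
          rw [hCa] at h1
          rw [← h1, hCb, hbd]
          push_cast
          ring
        have hEa' : (((a':ℕ):F)*(1-γ)+1) * γ^δ = (((a':ℕ):F) + ((δ:ℕ):F))*(1-γ) + 1 := by
          have h1 : γ^(b'+1) = γ^(a'+1) * γ^δ := by
            rw [← pow_add, show a' + 1 + δ = b' + 1 by omega]
          rw [hCa'] at h1
          rw [← h1, hCb', hbd']
          push_cast
          ring
        have hγδ : γ^δ ≠ 1 := by
          intro h1
          rw [h1, mul_one] at hEa
          have h2 : ((δ:ℕ):F) * (1-γ) = 0 := by linear_combination -hEa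
          rcases mul_eq_zero.mp h2 with h3 | h3
          · have h4 : p ∣ δ := (CharP.cast_eq_zero_iff F p δ).mp h3
            have := Nat.le_of_dvd hδ0 h4
            omega
          · exact hβ h3
        have hzero : (((a:ℕ):F) - ((a':ℕ):F)) * ((1-γ) * (γ^δ - 1)) = 0 := by
          linear_combination hEa - hEa'
        have haa : a = a' := by
          rcases mul_eq_zero.mp hzero with h4 | h4
          · have h5 : ((a:ℕ):F) = ((a':ℕ):F) := by linear_combination h4
            have h6 : a ≡ a' [MOD p] := (hcast_iff a a').mp h5
            have h7 : a % p = a' % p := h6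
            rwa [Nat.mod_eq_of_lt halt, Nat.mod_eq_of_lt halt'] at h7
          · rcases mul_eq_zero.mp h4 with h5 | h5
            · exact absurd h5 hβ
            · exfalso
              apply hγδ
              linear_combination h5
        exact ⟨haa, by omega⟩
      have hsidon := sidon_sq_bound p hp3 S' hS'lt hkey
      rw [← hs] at hsidon
      -- real number assembly
      have hNle2 : Fs.card ≤ d * Q + (s - 1) := by
        have h1 : T * Q ≤ d * Q := Nat.mul_le_mul_right Q hT_le_d
        omega
      have hdQR : ((d * Q : ℕ) : ℝ) = ((q:ℝ) - (p:ℝ))/(p:ℝ) := by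
        rw [eq_div_iff (ne_of_gt hpRpos)]
        have h1 : d * Q * p = q - p := by
          rw [hQ, hm₀]
          ring
        calc ((d * Q : ℕ):ℝ) * (p:ℝ) = ((d * Q * p : ℕ):ℝ) := by push_cast; ring
        _ = ((q - p : ℕ):ℝ) := by rw [h1]
        _ = (q:ℝ) - (p:ℝ) := by
            push_cast [hqgep]
            ring
      have hNR : (Fs.card : ℝ) ≤ ((q:ℝ) - (p:ℝ))/(p:ℝ) + ((s:ℝ) - 1) := by
        have h1 : (Fs.card : ℝ) ≤ ((d * Q + (s-1) : ℕ):ℝ) := by exact_mod_cast hNle2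
        have h2 : ((d * Q + (s-1) : ℕ):ℝ) = ((d*Q : ℕ):ℝ) + ((s:ℝ) - 1) := by
          push_cast [hs1]
          ring
        rw [h2, hdQR] at h1
        exact h1
      have hsidR : 2*(s:ℝ)*(s:ℝ) + 8 ≤ 5*(s:ℝ) + 3*(p:ℝ) := by exact_mod_cast hsidon
      have hsR : (s:ℝ) ≤ 5/4 + u := by
        by_contra hcon
        push_neg at hcon
        have h1 : u < (s:ℝ) - 5/4 := by linarith
        have h2 : u^2 < ((s:ℝ) - 5/4)^2 := by
          have h0 : (0:ℝ) ≤ (s:ℝ) - 5/4 := by linarith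
          calc u^2 = u * u := sq u
          _ < ((s:ℝ) - 5/4) * ((s:ℝ) - 5/4) := by
              apply mul_lt_mul' (le_of_lt h1) h1 hu0 (by linarith)
          _ = ((s:ℝ) - 5/4)^2 := (sq _).symm
        rw [hu2] at h2
        have h3 : ((s:ℝ) - 5/4)^2 = (s:ℝ)*(s:ℝ) - 5/2*(s:ℝ) + 25/16 := by ring
        linarith
      have hfin : ((q:ℝ) - (p:ℝ))/(p:ℝ) = (q:ℝ)/(p:ℝ) - 1 := by
        field_simp
      rw [hfin] at hNR
      linarith
    · -- CASE B2 : γ^p ≠ γ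
      set M := (q-2)/m₀ with hM
      clear_value M
      have hNleT : Fs.card ≤ T * (M+1) := by
        rw [hcount]
        calc ∑ v ∈ A, (Fs.filter fun i => i % m₀ = v).card
            ≤ ∑ _v ∈ A, (M+1) := by
              apply Finset.sum_le_sum
              intro v _
              rw [hM]
              exact filter_mod_card_le Fs (q-2) m₀ v hm₀pos hFs_le
        _ = T * (M+1) := by rw [Finset.sum_const, smul_eq_mul, hT]
      -- Sidon in Z_d : T*(T-1) ≤ d-1
      haveI : NeZero d := ⟨hd0⟩
      have hTT : T * T - T ≤ d - 1 := by
        have hinj : Set.InjOn (fun vw : ℕ × ℕ => ((vw.1 : ZMod d) - (vw.2 : ZMod d)))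
            ↑A.offDiag := by
          rintro ⟨v, w⟩ hvw ⟨v', w'⟩ hvw' heq
          have hvw1 := Finset.mem_offDiag.mp (Finset.mem_coe.mp hvw)
          have hvw2 := Finset.mem_offDiag.mp (Finset.mem_coe.mp hvw')
          obtain ⟨hvA, hwA, hne⟩ := hvw1
          obtain ⟨hvA', hwA', hne'⟩ := hvw2
          have hCv := (hAmem v hvA).1
          have hCw := (hAmem w hwA).1
          have hCv' := (hAmem v' hvA').1
          have hCw' := (hAmem w' hwA').1
          have hvlt := (hAmem v hvA).2
          have hwlt := (hAmem w hwA).2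
          have hvlt' := (hAmem v' hvA').2
          have hwlt' := (hAmem w' hwA').2
          simp only at heq
          have hsum0 : ((v + w' : ℕ) : ZMod d) = ((v' + w : ℕ) : ZMod d) := by
            push_cast
            linear_combination heq
          have hmodd : v + w' ≡ v' + w [MOD d] := by
            haveI : CharP (ZMod d) d := ZMod.charP d
            exact (CharP.natCast_eq_natCast (ZMod d) d).mp hsum0
          have hpoweq : γ ^ (v + w' + 2) = γ ^ (v' + w + 2) :=
            (hpow_iff _ _).mpr (hmodd.add_right 2)
          have hprodEq : γ ^ (v+1) * γ ^ (w'+1) = γ ^ (v'+1) * γ ^ (w+1) := by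
            rw [← pow_add, ← pow_add]
            rw [show v + 1 + (w' + 1) = v + w' + 2 by omega,
                show v' + 1 + (w + 1) = v' + w + 2 by omega]
            exact hpoweq
          rw [hC] at hCv hCw hCv' hCw'
          rw [hCv, hCw, hCv', hCw'] at hprodEq
          have hEQ1 : (v:F)*(w':F)*(1-γ) + ((v:F)+(w':F)) = (v':F)*(w:F)*(1-γ) + ((v':F)+(w:F)) := by
            have hexp : ((v:F)*(w':F)*(1-γ) + ((v:F)+(w':F))) * (1-γ)
                = ((v':F)*(w:F)*(1-γ) + ((v':F)+(w:F))) * (1-γ) := by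
              linear_combination hprodEq
            exact mul_right_cancel₀ hβ hexp
          have hEQ2 : (v:F)*(w':F)*((1-γ)^p) + ((v:F)+(w':F)) = (v':F)*(w:F)*((1-γ)^p) + ((v':F)+(w:F)) := by
            have h := congrArg (frobenius F p) hEQ1
            simp only [map_add, map_mul, map_natCast, frobenius_def] at h
            exact h
          have hβp : (1-γ) - (1-γ)^p ≠ 0 := by
            have h1 : (1-γ)^p = 1 - γ^p := by
              rw [sub_pow_char]
              simp
            rw [h1]
            intro h2
            apply hfrob
            linear_combination h2
          have hprod : (v:F)*(w':F) = (v':F)*(w:F) := by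
            have h3 : ((v:F)*(w':F) - (v':F)*(w:F)) * ((1-γ) - (1-γ)^p) = 0 := by
              linear_combination hEQ1 - hEQ2
            rcases mul_eq_zero.mp h3 with h4 | h4
            · linear_combination h4
            · exact absurd h4 hβp
          have hsum : (v:F) + (w':F) = (v':F) + (w:F) := by
            linear_combination hEQ1 - (1-γ) * hprod
          have hfac : ((v:F) - (v':F)) * ((v:F) - (w:F)) = 0 := by
            linear_combination (v:F) * hsum - hprod
          rcases mul_eq_zero.mp hfac with h5 | h5
          · have hvv' : v = v' := by
              apply hdet_p v v' hCv hCv' hvlt hvlt'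
              apply (hcast_iff v v').mp
              linear_combination h5
            have hww' : w = w' := by
              apply hdet_p w w' hCw hCw' hwlt hwlt'
              apply (hcast_iff w w').mp
              have h6 : (w:F) = (w':F) := by
                rw [hvv'] at hsum
                linear_combination -hsum
              exact h6
            rw [Prod.mk.injEq]
            exact ⟨hvv', hww'⟩
          · exfalso
            apply hne
            apply hdet_p v w hCv hCw hvlt hwlt
            apply (hcast_iff v w).mp
            linear_combination h5
        have hmaps : ∀ vw ∈ A.offDiag,
            (fun vw : ℕ × ℕ => ((vw.1 : ZMod d) - (vw.2 : ZMod d))) vw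
              ∈ (Finset.univ : Finset (ZMod d)).erase 0 := by
          rintro ⟨v, w⟩ hvw
          obtain ⟨hvA, hwA, hne⟩ := Finset.mem_offDiag.mp hvw
          rw [Finset.mem_erase]
          refine ⟨?_, Finset.mem_univ _⟩
          simp only
          intro h0
          apply hne
          have hcst : ((v:ℕ) : ZMod d) = ((w:ℕ) : ZMod d) := by
            linear_combination h0
          haveI : CharP (ZMod d) d := ZMod.charP d
          have hmodd : v ≡ w [MOD d] := (CharP.natCast_eq_natCast (ZMod d) d).mp hcst
          exact hdet_d v w (hAmem v hvA).1 (hAmem w hwA).1 (hAmem v hvA).2 (hAmem w hwA).2 hmodd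
        have hcards := Finset.card_le_card_of_injOn _ (fun vw hvw => hmaps vw hvw) hinj
        rw [Finset.offDiag_card, Finset.card_erase_of_mem (Finset.mem_univ 0),
            Finset.card_univ, ZMod.card] at hcards
        rw [hT]
        exact hcards
      by_cases hT2 : T ≤ 2
      · have h1 : Fs.card ≤ 2*M + 2 := by
          calc Fs.card ≤ T * (M+1) := hNleT
          _ ≤ 2 * (M+1) := Nat.mul_le_mul_right _ hT2
          _ = 2*M + 2 := by ring
        have h2 : 2*M ≤ (q-2)/p := by
          have hM2 : M ≤ (q-2)/(2*p) := by
            rw [hM, hm₀]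
            apply Nat.div_le_div_left (Nat.mul_le_mul_right p hd2) (by omega)
          have h3 : (q-2)/(2*p) = (q-2)/p/2 := by
            rw [Nat.div_div_eq_div_mul, mul_comm]
          rw [h3] at hM2
          omega
        have hcast1 : (Fs.card : ℝ) ≤ (((q-2)/p : ℕ):ℝ) + 2 := by
          have h4 : Fs.card ≤ (q-2)/p + 2 := by omega
          exact_mod_cast h4
        have hcast2 : (((q-2)/p : ℕ):ℝ) ≤ ((q:ℝ)-2)/(p:ℝ) := by
          calc (((q-2)/p : ℕ):ℝ) ≤ ((q-2:ℕ):ℝ)/(p:ℝ) := Nat.cast_div_le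
          _ = ((q:ℝ)-2)/(p:ℝ) := by rw [hq2cast]
        have hfin : ((q:ℝ)-2)/(p:ℝ) + 2 ≤ (q:ℝ)/(p:ℝ) + u + 1/4 := by
          have hexp : ((q:ℝ)-2)/(p:ℝ) = (q:ℝ)/(p:ℝ) - 2/(p:ℝ) := by ring
          rw [hexp]
          linarith
        linarith
      · push_neg at hT2
        have hT3 : 3 ≤ T := hT2
        by_cases hdpq : q - 2 < m₀
        · have hM0 : M = 0 := by rw [hM]; exact Nat.div_eq_of_lt hdpq
          have h1 : Fs.card ≤ T := by
            rw [hM0] at hNleT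
            simpa using hNleT
          have h2 : (Fs.card : ℝ) ≤ (p:ℝ) := by
            have h3 : Fs.card ≤ p := le_trans h1 hT_le_p
            exact_mod_cast h3
          have h3 : (p:ℝ) ≤ (q:ℝ)/(p:ℝ) := by
            rw [le_div_iff₀ hpRpos]
            exact_mod_cast hqge
          linarith
        · push_neg at hdpq
          have hdR : (d:ℝ) ≤ ((q:ℝ)-2)/(p:ℝ) := by
            rw [le_div_iff₀ hpRpos]
            have h1 : d * p ≤ q - 2 := by rw [← hm₀]; exact hdpq
            calc (d:ℝ) * (p:ℝ) = ((d*p : ℕ):ℝ) := by push_cast; ring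
            _ ≤ ((q-2 : ℕ):ℝ) := by exact_mod_cast h1
            _ = (q:ℝ) - 2 := hq2cast
          have hTTR : (T:ℝ) * ((T:ℝ)-1) ≤ (d:ℝ) := by
            have h0 : T ≤ T * T := Nat.le_mul_of_pos_left T (by omega)
            have h1 : T*T + 1 ≤ d + T := by omega
            have h2 : ((T*T + 1 : ℕ):ℝ) ≤ ((d + T : ℕ):ℝ) := Nat.cast_le.mpr h1
            push_cast at h2
            have h3 : (T:ℝ)*((T:ℝ)-1) = (T:ℝ)*(T:ℝ) - (T:ℝ) := by ring
            have h4 : (1:ℝ) ≤ ((T:ℕ):ℝ) := by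
              have h5 : (1:ℕ) ≤ T := by omega
              exact_mod_cast h5
            linarith [h2, h3]
          have hTR3 : (3:ℝ) ≤ (T:ℝ) := by exact_mod_cast hT3
          set R : ℝ := ((q:ℝ)-2)/(p:ℝ) with hR
          have hR0 : (0:ℝ) ≤ R := by
            apply div_nonneg _ (le_of_lt hpRpos)
            have h9 : (9:ℝ) ≤ (q:ℝ) := by exact_mod_cast hq9
            linarith
          have hRT : (T:ℝ) - 1 ≤ R := by
            have h0 := mul_le_mul_of_nonneg_right (show (1:ℝ) ≤ (T:ℝ) by linarith)
              (show (0:ℝ) ≤ (T:ℝ)-1 by linarith)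
            have h1 : (T:ℝ) - 1 ≤ (T:ℝ)*((T:ℝ)-1) := by linarith [h0]
            linarith [le_trans (le_trans h1 hTTR) hdR]
          have hNR : (Fs.card : ℝ) ≤ (T:ℝ) * ((M:ℝ)+1) := by
            have h1 : ((T * (M+1) : ℕ):ℝ) = (T:ℝ)*((M:ℝ)+1) := by push_cast; ring
            rw [← h1]
            exact_mod_cast hNleT
          have hMR : (M:ℝ) ≤ ((q:ℝ)-2)/((m₀:ℕ):ℝ) := by
            rw [hM]
            calc (((q-2)/m₀ : ℕ):ℝ) ≤ ((q-2:ℕ):ℝ)/((m₀:ℕ):ℝ) := Nat.cast_div_le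
            _ = ((q:ℝ)-2)/((m₀:ℕ):ℝ) := by rw [hq2cast]
          have hm₀R : ((m₀:ℕ):ℝ) = (d:ℝ)*(p:ℝ) := by rw [hm₀]; push_cast; ring
          have hdRpos : (0:ℝ) < (d:ℝ) := by
            have h1 : (2:ℝ) ≤ (d:ℝ) := by exact_mod_cast hd2
            linarith
          have hq2pos : (0:ℝ) ≤ (q:ℝ)-2 := by
            have h9 : (9:ℝ) ≤ (q:ℝ) := by exact_mod_cast hq9
            linarith
          have hstep1 : (T:ℝ) * ((M:ℝ)+1) ≤ R/((T:ℝ)-1) + (T:ℝ) := by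
            have hTpos : (0:ℝ) ≤ (T:ℝ) := by positivity
            have h1 : (T:ℝ)*((M:ℝ)+1) = (T:ℝ)*(M:ℝ) + T := by ring
            have h2 : (T:ℝ)*(M:ℝ) ≤ (T:ℝ)*(((q:ℝ)-2)/((d:ℝ)*(p:ℝ))) := by
              apply mul_le_mul_of_nonneg_left _ hTpos
              rw [← hm₀R]
              exact hMR
            have h3 : (T:ℝ)*(((q:ℝ)-2)/((d:ℝ)*(p:ℝ))) ≤ R/((T:ℝ)-1) := by
              have hL : (T:ℝ)*(((q:ℝ)-2)/((d:ℝ)*(p:ℝ))) = ((T:ℝ)*((q:ℝ)-2))/((d:ℝ)*(p:ℝ)) := by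
                ring
              have hRr : R/((T:ℝ)-1) = ((q:ℝ)-2)/((p:ℝ)*((T:ℝ)-1)) := by
                rw [hR, div_div]
              rw [hL, hRr, div_le_div_iff₀ (mul_pos hdRpos hpRpos)
                (mul_pos hpRpos (by linarith : (0:ℝ) < (T:ℝ)-1))]
              calc (T:ℝ)*((q:ℝ)-2) * ((p:ℝ)*((T:ℝ)-1))
                  = ((p:ℝ)*((q:ℝ)-2)) * ((T:ℝ)*((T:ℝ)-1)) := by ring
              _ ≤ ((p:ℝ)*((q:ℝ)-2)) * (d:ℝ) :=
                  mul_le_mul_of_nonneg_left hTTR (mul_nonneg (le_of_lt hpRpos) hq2pos)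
              _ = ((q:ℝ)-2) * ((d:ℝ)*(p:ℝ)) := by ring
            linarith
          have hstep2 : R/((T:ℝ)-1) + (T:ℝ) ≤ R + 2 := by
            have hT1pos : (0:ℝ) < (T:ℝ) - 1 := by linarith
            have hkey : (0:ℝ) ≤ ((T:ℝ)-2)*(R-((T:ℝ)-1)) :=
              mul_nonneg (by linarith) (by linarith)
            have hdiv : R/((T:ℝ)-1) ≤ R - (T:ℝ) + 2 := by
              rw [div_le_iff₀ hT1pos]
              have hexp : (R - (T:ℝ) + 2)*((T:ℝ)-1) - R = ((T:ℝ)-2)*(R-((T:ℝ)-1)) := by ring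
              linarith
            linarith
          have hfin : R + 2 ≤ (q:ℝ)/(p:ℝ) + u + 1/4 := by
            have hexp : R = (q:ℝ)/(p:ℝ) - 2/(p:ℝ) := by rw [hR]; ring
            rw [hexp]
            linarith
          linarith
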